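/- Nonlinear integral equation: the solution X(t) of the nonlinear master equation dX/dt = −i[H_eff(X), X], H_eff(X) = H⁰(t) + Σ_μ V_μ(t) tr(X σ^μ) σ^μ, X(0) = |φ⟩⟨φ|, satisfies X(t) = u_t |φ⟩⟨φ| u_t† − i ∫₀^t (u_t u_τ†) tr₂[V₁₂(τ), X(τ) ⊗ X(τ)] (u_t u_τ†)† dτ for all t ≥ 0, where V₁₂(τ) = Σ_μ V_μ(τ) σ^μ ⊗ σ^μ. -/

import Mathlib

open Matrix Finset
open scoped Kronecker ComplexConjugate

noncomputable section

/-- Configuration space of `n` qubits. -/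
abbrev QState (n : ℕ) := Fin n → Fin 2

/-- Operators (matrices) on the Hilbert space `(ℂ²)^{⊗n}` of `n` qubits. -/
abbrev NOp (n : ℕ) := Matrix (QState n) (QState n) ℂ

/-- One-qubit operators. -/
abbrev Op2 := Matrix (Fin 2) (Fin 2) ℂ

/-- Two-qubit operators. -/
abbrev Op4 := Matrix (Fin 2 × Fin 2) (Fin 2 × Fin 2) ℂ

/-- The trace norm `‖A‖₁ = tr √(A†A)`, computed as the sum of the square roots
of the eigenvalues of the positive semidefinite matrix `A†A`. -/
def traceNorm {m : Type*} [Fintype m] [DecidableEq m] (A : Matrix m m ℂ) : ℝ :=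
  ∑ i, Real.sqrt ((Matrix.isHermitian_conjTranspose_mul_self A).eigenvalues i)

/-- The Pauli matrices σ¹, σ², σ³. -/
def pauli : Fin 3 → Op2
  | 0 => !![0, 1; 1, 0]
  | 1 => !![0, -Complex.I; Complex.I, 0]
  | 2 => !![1, 0; 0, -1]

/-- The two-qubit interaction `V₁₂ = Σ_μ V_μ σ^μ ⊗ σ^μ`. -/
def Vint (V : Fin 3 → ℝ) : Op4 := ∑ μ, (V μ : ℂ) • (pauli μ ⊗ₖ pauli μ)

/-- Embed a one-qubit operator at site `i` of the `n`-qubit lattice (identity elsewhere). -/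
def onSite {n : ℕ} (i : Fin n) (A : Op2) : NOp n :=
  Matrix.of fun x y => A (x i) (y i) * ∏ j ∈ Finset.univ.erase i, (if x j = y j then (1 : ℂ) else 0)

/-- Embed a two-qubit operator at the ordered pair of sites `(i, j)` (identity elsewhere). -/
def onPair {n : ℕ} (i j : Fin n) (M : Op4) : NOp n :=
  Matrix.of fun x y => M (x i, x j) (y i, y j) *
    ∏ l ∈ (Finset.univ.erase i).erase j, (if x l = y l then (1 : ℂ) else 0)

/-- The central spin Hamiltonian `H = Σ_i H⁰_i + (1/(n-1)) Σ_{i≠0} V_{0i}`;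
qubit `0` is the central qubit and `V` lists the three couplings `V_μ`. -/
def centralH (n : ℕ) [NeZero n] (H0 : Op2) (V : Fin 3 → ℝ) : NOp n :=
  (∑ i, onSite i H0) +
    ((n : ℂ) - 1)⁻¹ • ∑ i ∈ Finset.univ.erase (0 : Fin n), onPair 0 i (Vint V)

/-- `H(t) - H^{(k)}(t) = (1/(n-1)) Σ_{i ≥ k} V_{0i}`: the interactions removed from the
modified Hamiltonian `H^{(k)}` (the first `k` qubits `0,…,k-1` are decoupled from the rest). -/
def Hrest (n : ℕ) [NeZero n] (V : Fin 3 → ℝ) (k : ℕ) : NOp n :=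
  ((n : ℂ) - 1)⁻¹ • ∑ i ∈ Finset.univ.filter (fun i : Fin n => k ≤ (i : ℕ)), onPair 0 i (Vint V)

/-- `𝓗^{(k)}(t) = U_t† (H(t) - H^{(k)}(t)) U_t`. -/
def scriptH (n : ℕ) [NeZero n] (V : Fin 3 → ℝ) (k : ℕ) (Ut : NOp n) : NOp n :=
  Utᴴ * Hrest n V k * Ut

/-- An operator on `n` qubits is supported on the set `S` of qubits if it is a matrix on
the qubits in `S` tensored with the identity on all other qubit factors. -/
def SupportedOn {n : ℕ} (S : Finset (Fin n)) (A : NOp n) : Prop :=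
  ∃ M : Matrix (∀ _ : S, Fin 2) (∀ _ : S, Fin 2) ℂ, ∀ x y : QState n,
    A x y = M (fun i => x i.1) (fun i => y i.1) *
      ∏ j ∈ Finset.univ \ S, (if x j = y j then (1 : ℂ) else 0)

/-- The product state vector `|Φ⟩ = |φ⟩^{⊗n}`. -/
def prodVec {n : ℕ} (φ : Fin 2 → ℂ) : QState n → ℂ := fun x => ∏ i, φ (x i)

/-- The one-qubit projector `|φ⟩⟨φ|`. -/
def proj (φ : Fin 2 → ℂ) : Op2 := Matrix.of fun a b => φ a * conj (φ b)

/-- The product density matrix `(|φ⟩⟨φ|)^{⊗n}`. -/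
def prodState (n : ℕ) (φ : Fin 2 → ℂ) : NOp n :=
  Matrix.of fun x y => prodVec φ x * conj (prodVec φ y)

/-- Partial trace over all qubits except the central qubit `0`. -/
def ptraceC {n : ℕ} [NeZero n] (ρ : NOp n) : Op2 :=
  Matrix.of fun a b => ∑ g : QState n, if g 0 = b then ρ (Function.update g 0 a) g else 0

/-- Partial trace over all qubits except qubits `0` and `1` (the two-qubit reduced state). -/
def ptrace01 {n : ℕ} [NeZero n] (ρ : NOp n) : Op4 :=
  Matrix.of fun p q => ∑ g : QState n,
    if g 0 = q.1 ∧ g 1 = q.2 then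
      ρ (Function.update (Function.update g 0 p.1) 1 p.2) g else 0

/-- Trace over the second factor of a two-qubit operator. -/
def ptrace2 (M : Op4) : Op2 := Matrix.of fun a b => ∑ c, M (a, c) (b, c)

/-- Commutator of matrices. -/
def matComm {m : Type*} [Fintype m] (A B : Matrix m m ℂ) : Matrix m m ℂ := A * B - B * A

/-- Quantum expectation value `⟨ψ|M|ψ⟩`. -/
def expval {n : ℕ} (ψ : QState n → ℂ) (M : NOp n) : ℂ := star ψ ⬝ᵥ M.mulVec ψ

/-- `Q = I - |φ⟩⟨φ|`. -/
def Qop (φ : Fin 2 → ℂ) : Op2 := 1 - proj φ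

/-- `P_j = (|φ⟩⟨φ|)^{⊗ j} ⊗ Q ⊗ I^{⊗(n-j-1)}` (qubits indexed from 0). -/
def Pop {n : ℕ} (φ : Fin 2 → ℂ) (j : Fin n) : NOp n :=
  Matrix.of fun x y =>
    (∏ i ∈ Finset.univ.filter (fun i : Fin n => i < j), (φ (x i) * conj (φ (y i)))) *
    Qop φ (x j) (y j) *
    ∏ i ∈ Finset.univ.filter (fun i : Fin n => j < i), (if x i = y i then (1 : ℂ) else 0)

/-- The SWAP unitary `χ_{ij}` exchanging tensor factors `i` and `j`. -/
def swapOp (n : ℕ) (i j : Fin n) : NOp n :=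
  Matrix.of fun x y => if x = y ∘ (Equiv.swap i j) then (1 : ℂ) else 0

/-- The normalized commutator supremum `C_k` of the Lieb–Robinson bound, at a fixed time with
evolution operator `Ut`: the sup over nonzero `A` supported on qubits `{0,…,k-1}` and nonzero
`B` supported on qubit `k` of `‖[U† A U, B]‖₁/(‖A‖₁‖B‖₁)`. -/
def Cnorm {n : ℕ} (Ut : NOp n) (k : ℕ) : ℝ :=
  sSup {r : ℝ | ∃ A B : NOp n,
    SupportedOn (Finset.univ.filter fun i : Fin n => (i : ℕ) < k) A ∧ A ≠ 0 ∧
    SupportedOn (Finset.univ.filter fun i : Fin n => (i : ℕ) = k) B ∧ B ≠ 0 ∧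
    r = traceNorm (matComm (Utᴴ * A * Ut) B) / (traceNorm A * traceNorm B)}


set_option linter.unusedSectionVars false

section auxHelpers
variable {m : Type*} [Fintype m]

lemma hasDerivAt_matrix_mul' {A B : ℝ → Matrix m m ℂ} {A' B' : Matrix m m ℂ} {t : ℝ}
    (hA : ∀ a b, HasDerivAt (fun s => A s a b) (A' a b) t)
    (hB : ∀ a b, HasDerivAt (fun s => B s a b) (B' a b) t) :
    ∀ a b, HasDerivAt (fun s => (A s * B s) a b) ((A' * B t + A t * B') a b) t := by
  intro a b
  have : HasDerivAt (fun s => ∑ c, A s a c * B s c b)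
      (∑ c, (A' a c * B t c b + A t a c * B' c b)) t :=
    HasDerivAt.fun_sum fun c _ => (hA a c).mul (hB c b)
  simpa [Matrix.mul_apply, Matrix.add_apply, Finset.sum_add_distrib] using this

lemma continuous_matrix_mul' {A B : ℝ → Matrix m m ℂ}
    (hA : ∀ a b, Continuous (fun s => A s a b))
    (hB : ∀ a b, Continuous (fun s => B s a b)) :
    ∀ a b, Continuous (fun s => (A s * B s) a b) := by
  intro a b
  simp only [Matrix.mul_apply]
  exact continuous_finset_sum _ fun c _ => (hA a c).mul (hB c b)

lemma hasDerivAt_matrix_ct' {A : ℝ → Matrix m m ℂ} {A' : Matrix m m ℂ} {t : ℝ}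
    (hA : ∀ a b, HasDerivAt (fun s => A s a b) (A' a b) t) :
    ∀ a b, HasDerivAt (fun s => (A s)ᴴ a b) (A'ᴴ a b) t := by
  intro a b
  simpa [Matrix.conjTranspose_apply] using (hA b a).star

end auxHelpers

lemma ptrace2_kron' (M N : Op2) : ptrace2 (M ⊗ₖ N) = N.trace • M := by
  ext a b
  simp [ptrace2, Matrix.trace, Matrix.diag, Finset.sum_mul, mul_comm, mul_add]

lemma ptrace2_sum' {ι : Type*} (s : Finset ι) (M : ι → Op4) :
    ptrace2 (∑ μ ∈ s, M μ) = ∑ μ ∈ s, ptrace2 (M μ) := by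
  ext a b
  simp only [ptrace2, Matrix.sum_apply, Matrix.of_apply]
  exact Finset.sum_comm

lemma ptrace2_smul' (c : ℂ) (M : Op4) : ptrace2 (c • M) = c • ptrace2 M := by
  ext a b; simp [ptrace2, Finset.mul_sum, mul_add]

lemma ptrace2_sub' (M N : Op4) : ptrace2 (M - N) = ptrace2 M - ptrace2 N := by
  ext a b; simp [ptrace2, Finset.sum_sub_distrib]

lemma key_alg (W : Fin 3 → ℝ) (X : Op2) :
    ptrace2 (matComm (Vint W) (X ⊗ₖ X))
      = ∑ μ, ((W μ : ℂ) * Matrix.trace (X * pauli μ)) • matComm (pauli μ) X := by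
  have h1 : matComm (Vint W) (X ⊗ₖ X)
      = ∑ μ, (W μ : ℂ) • ((pauli μ * X) ⊗ₖ (pauli μ * X) - (X * pauli μ) ⊗ₖ (X * pauli μ)) := by
    simp only [matComm, Vint, Finset.sum_mul, Finset.mul_sum, Matrix.smul_mul,
      Matrix.mul_smul, Matrix.mul_kronecker_mul, smul_sub, ← Finset.sum_sub_distrib]
  rw [h1, ptrace2_sum']
  refine Finset.sum_congr rfl fun μ _ => ?_
  rw [ptrace2_smul', ptrace2_sub', ptrace2_kron', ptrace2_kron', matComm,
    Matrix.trace_mul_comm X (pauli μ), ← smul_sub, smul_smul]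

lemma deriv_ident (A U Xm H S : Op2) :
    ((Complex.I • (A * H)) * Xm + A * ((-Complex.I) • ((H + S) * Xm - Xm * (H + S)))) * U
        + (A * Xm) * ((-Complex.I) • (H * U))
      = (-Complex.I) • (A * (S * Xm - Xm * S) * U) := by
  simp only [smul_mul_assoc, mul_smul_comm, add_mul, sub_mul, mul_sub, mul_add,
    Matrix.mul_assoc, smul_sub, smul_add]
  module

lemma unit_ident (A U H : Op2) :
    (Complex.I • (A * H)) * U + A * ((-Complex.I) • (H * U)) = 0 := by
  simp only [smul_mul_assoc, mul_smul_comm, Matrix.mul_assoc]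
  module


/-- Auxiliary: the integrand matrix in the co-rotating frame. -/
def gm (V : Fin 3 → ℝ → ℝ) (u X : ℝ → Op2) (τ : ℝ) : Op2 :=
  (-Complex.I) • ((u τ)ᴴ * ptrace2 (matComm (Vint fun μ => V μ τ) (X τ ⊗ₖ X τ)) * u τ)

theorem statement8
    (H0 : ℝ → Op2) (hH0 : ∀ t, (H0 t).IsHermitian)
    (V : Fin 3 → ℝ → ℝ) (hVcont : ∀ μ, Continuous (V μ))
    (u : ℝ → Op2) (hu0 : u 0 = 1)
    (hu : ∀ t a b, HasDerivAt (fun s => u s a b) (((-Complex.I) • (H0 t * u t)) a b) t)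
    (φ : Fin 2 → ℂ) (hφ : ∑ a, Complex.normSq (φ a) = 1)
    (X : ℝ → Op2) (hX0 : X 0 = proj φ)
    (hX : ∀ t a b, HasDerivAt (fun s => X s a b)
      (((-Complex.I) • matComm
        (H0 t + ∑ μ, ((V μ t : ℂ) * Matrix.trace (X t * pauli μ)) • pauli μ) (X t)) a b) t)
    :
    ∀ t : ℝ, 0 ≤ t → ∀ a b : Fin 2,
      X t a b
        = (u t * proj φ * (u t)ᴴ) a b
          + ∫ τ in (0:ℝ)..t,
              (((-Complex.I) • ((u t * (u τ)ᴴ) *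
                ptrace2 (matComm (Vint fun μ => V μ τ) (X τ ⊗ₖ X τ)) *
                (u t * (u τ)ᴴ)ᴴ)) a b) := by
  -- derivative of uᴴ
  have huH : ∀ t a b, HasDerivAt (fun s => (u s)ᴴ a b)
      ((Complex.I • ((u t)ᴴ * H0 t)) a b) t := by
    intro t a b
    have h := hasDerivAt_matrix_ct' (hu t) a b
    have he : ((-Complex.I) • (H0 t * u t))ᴴ = Complex.I • ((u t)ᴴ * H0 t) := by
      rw [Matrix.conjTranspose_smul, Matrix.conjTranspose_mul, (hH0 t).eq]
      simp
    rwa [he] at h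
  -- unitarity
  have hunit : ∀ t, u t * (u t)ᴴ = 1 := by
    intro t
    have hder : ∀ s a b, HasDerivAt (fun r => ((u r)ᴴ * u r) a b) 0 s := by
      intro s a b
      have h := hasDerivAt_matrix_mul' (huH s) (hu s) a b
      rwa [unit_ident, Matrix.zero_apply] at h
    have h1 : (u t)ᴴ * u t = 1 := by
      ext a b
      have hc : ((u t)ᴴ * u t) a b = ((u 0)ᴴ * u 0) a b :=
        is_const_of_deriv_eq_zero (fun s => (hder s a b).differentiableAt)
          (fun s => (hder s a b).deriv) t 0
      rw [hc, hu0]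
      simp
    exact mul_eq_one_comm.mpr h1
  -- continuity of entries
  have hXc : ∀ a b, Continuous fun s => X s a b := fun a b =>
    continuous_iff_continuousAt.mpr fun s => (hX s a b).continuousAt
  have huc : ∀ a b, Continuous fun s => u s a b := fun a b =>
    continuous_iff_continuousAt.mpr fun s => (hu s a b).continuousAt
  have hucH : ∀ a b, Continuous fun s => (u s)ᴴ a b := by
    intro a b
    simp only [Matrix.conjTranspose_apply]
    exact Complex.continuous_conj.comp (huc b a)
  have hWc : ∀ a b, Continuous fun τ =>
      ptrace2 (matComm (Vint fun μ => V μ τ) (X τ ⊗ₖ X τ)) a b := by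
    intro a b
    have hrw : (fun τ => ptrace2 (matComm (Vint fun μ => V μ τ) (X τ ⊗ₖ X τ)) a b)
        = fun τ => ∑ μ, ((V μ τ : ℂ) * Matrix.trace (X τ * pauli μ)) *
            matComm (pauli μ) (X τ) a b := by
      funext τ
      rw [key_alg]
      simp [Matrix.sum_apply]
    rw [hrw]
    refine continuous_finset_sum _ fun μ _ => Continuous.mul (Continuous.mul ?_ ?_) ?_
    · exact Complex.continuous_ofReal.comp (hVcont μ)
    · simp only [Matrix.trace, Matrix.diag, Matrix.mul_apply]
      exact continuous_finset_sum _ fun c _ =>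
        continuous_finset_sum _ fun d _ => (hXc c d).mul continuous_const
    · simp only [matComm, Matrix.sub_apply, Matrix.mul_apply]
      exact Continuous.sub
        (continuous_finset_sum _ fun c _ => continuous_const.mul (hXc c b))
        (continuous_finset_sum _ fun c _ => (hXc a c).mul continuous_const)
  have hgc : ∀ a b, Continuous fun τ => gm V u X τ a b := by
    intro a b
    have h := continuous_matrix_mul' (continuous_matrix_mul' hucH hWc) huc a b
    simp only [gm, Matrix.smul_apply, smul_eq_mul]
    exact continuous_const.mul h
  -- derivative of the frame-transformed state
  have hFd : ∀ s a b, HasDerivAt (fun r => ((u r)ᴴ * X r * u r) a b) (gm V u X s a b) s := by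
    intro s a b
    have h := hasDerivAt_matrix_mul' (hasDerivAt_matrix_mul' (huH s) (hX s)) (hu s) a b
    have hS : (∑ μ, ((V μ s : ℂ) * Matrix.trace (X s * pauli μ)) • pauli μ) * X s
        - X s * (∑ μ, ((V μ s : ℂ) * Matrix.trace (X s * pauli μ)) • pauli μ)
        = ∑ μ, ((V μ s : ℂ) * Matrix.trace (X s * pauli μ)) • matComm (pauli μ) (X s) := by
      simp only [Finset.sum_mul, Finset.mul_sum, Matrix.smul_mul, Matrix.mul_smul,
        ← Finset.sum_sub_distrib, ← smul_sub, matComm]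
    have he : (Complex.I • ((u s)ᴴ * H0 s) * X s + (u s)ᴴ * ((-Complex.I) • matComm
          (H0 s + ∑ μ, ((V μ s : ℂ) * Matrix.trace (X s * pauli μ)) • pauli μ) (X s))) * u s
        + ((u s)ᴴ * X s) * ((-Complex.I) • (H0 s * u s)) = gm V u X s := by
      rw [matComm, deriv_ident, hS, gm, key_alg]
    rwa [he] at h
  intro t ht a b
  -- fundamental theorem of calculus, entrywise
  have hInt : ∀ c d, (∫ τ in (0:ℝ)..t, gm V u X τ c d)
      = ((u t)ᴴ * X t * u t) c d - proj φ c d := by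
    intro c d
    rw [intervalIntegral.integral_eq_sub_of_hasDerivAt (fun τ _ => hFd τ c d)
      ((hgc c d).intervalIntegrable 0 t)]
    congr 1
    rw [hu0, hX0]
    simp
  -- rewrite the integrand
  have hint_eq : ∀ τ, (((-Complex.I) • ((u t * (u τ)ᴴ) *
        ptrace2 (matComm (Vint fun μ => V μ τ) (X τ ⊗ₖ X τ)) *
        (u t * (u τ)ᴴ)ᴴ)) a b) = (u t * gm V u X τ * (u t)ᴴ) a b := by
    intro τ
    have hct : (u t * (u τ)ᴴ)ᴴ = u τ * (u t)ᴴ := by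
      simp [Matrix.conjTranspose_mul]
    rw [hct]
    simp [gm, mul_smul_comm, smul_mul_assoc, Matrix.mul_assoc]
  simp only [hint_eq]
  -- pull the constant matrices out of the integral
  have hentry : ∀ τ, (u t * gm V u X τ * (u t)ᴴ) a b
      = ∑ d, ∑ c, u t a c * gm V u X τ c d * (u t)ᴴ d b := by
    intro τ
    simp [Matrix.mul_apply, Finset.sum_mul]
    ring
  simp only [hentry]
  rw [intervalIntegral.integral_finset_sum (fun d _ => ?_)]
  swap
  · exact (continuous_finset_sum _ fun c _ =>
      ((continuous_const.mul (hgc c d)).mul continuous_const)).intervalIntegrable 0 t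
  have hsum : ∀ d, (∫ τ in (0:ℝ)..t, ∑ c, u t a c * gm V u X τ c d * (u t)ᴴ d b)
      = ∑ c, u t a c * (∫ τ in (0:ℝ)..t, gm V u X τ c d) * (u t)ᴴ d b := by
    intro d
    rw [intervalIntegral.integral_finset_sum
      (f := fun c τ => u t a c * gm V u X τ c d * (u t)ᴴ d b) (fun c _ =>
      ((continuous_const.mul (hgc c d)).mul continuous_const).intervalIntegrable 0 t)]
    refine Finset.sum_congr rfl fun c _ => ?_
    rw [intervalIntegral.integral_mul_const, intervalIntegral.integral_const_mul]
  simp only [hsum, hInt]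
  -- final algebraic assembly
  have hmat : ∀ M : Op2, (∑ d, ∑ c, u t a c * M c d * (u t)ᴴ d b)
      = (u t * M * (u t)ᴴ) a b := by
    intro M
    simp [Matrix.mul_apply, Finset.sum_mul]
    ring
  have hdiff : ∀ c d, u t a c * (((u t)ᴴ * X t * u t) c d - proj φ c d) * (u t)ᴴ d b
      = u t a c * ((u t)ᴴ * X t * u t - proj φ) c d * (u t)ᴴ d b := by
    intro c d
    simp [Matrix.sub_apply]
  simp only [hdiff]
  rw [hmat, ← Matrix.add_apply]
  have hfin : u t * proj φ * (u t)ᴴ + u t * ((u t)ᴴ * X t * u t - proj φ) * (u t)ᴴ = X t := by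
    have h2 : u t * ((u t)ᴴ * X t * u t) * (u t)ᴴ = X t := by
      have : u t * ((u t)ᴴ * X t * u t) * (u t)ᴴ
          = (u t * (u t)ᴴ) * X t * (u t * (u t)ᴴ) := by noncomm_ring
      rw [this, hunit t]
      simp
    calc u t * proj φ * (u t)ᴴ + u t * ((u t)ᴴ * X t * u t - proj φ) * (u t)ᴴ
        = u t * ((u t)ᴴ * X t * u t) * (u t)ᴴ := by noncomm_ring
      _ = X t := h2
  rw [hfin]

end
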